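/- For every α ∈ I, every integer j ≥ 1, every β ∈ I with β ≠ e, and every word w ∈ List I: fusW (α :: e^j) (β :: w) = {α :: (e^j ++ β :: w), α :: (e^{j−1} ++ β :: w)}. (Combinatorial form of the identities ω(x_t) ⊗ ω(β,…) = ω(α, 1^{2t−1}, β,…) ⊕ ω(α, 1^{2t−2}, β,…) from the proof of Lemma 2.5(3) of the paper.) -/

import Mathlib

/- Combinatorial model of the Lemeux–Tarrago fusion rules for a free wreath
product 𝔾 ≀* S_N⁺. Words over `I` (a type modeling `Irr 𝔾`) label the
irreducible corepresentations. -/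

variable {I : Type*}

/-- The conjugate word `x̄ = (x.map bar).reverse`. -/
def conjW (bar : I → I) (x : List I) : List I := (x.map bar).reverse

/-- `fusW bar fus x y` is the set of words `z` such that `ω(z)` is a direct
summand of `ω(x) ⊗ ω(y)`: there are `u, t, v` with `x = u ++ t`,
`y = t̄ ++ v` and either `z = u ++ v` (concatenation), or `u ≠ []`, `v ≠ []`
and `z = u.dropLast ++ [γ] ++ v.tail` for some `γ ∈ fus u.getLast v.head`
(fusion). -/
def fusW (bar : I → I) (fus : I → I → Set I) (x y : List I) : Set (List I) :=
  {z | ∃ u t v : List I, x = u ++ t ∧ y = conjW bar t ++ v ∧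
    (z = u ++ v ∨ ∃ a b : I, u.getLast? = some a ∧ v.head? = some b ∧
      ∃ γ ∈ fus a b, z = u.dropLast ++ [γ] ++ v.tail)}

/-- `A ∘ B` for sets of words. -/
def fusSet (bar : I → I) (fus : I → I → Set I) (A B : Set (List I)) :
    Set (List I) :=
  {z | ∃ x ∈ A, ∃ y ∈ B, z ∈ fusW bar fus x y}

/-- `E₁`: words starting with `e`, together with the empty word. -/
def E₁ (e : I) : Set (List I) := {x | x = [] ∨ x.head? = some e}

/-- `E₂`: words all of whose letters equal `e`. -/
def E₂ (e : I) : Set (List I) := {x | ∃ k : ℕ, x = List.replicate k e}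

/-- `E₃ = E₁ \ E₂`. -/
def E₃ (e : I) : Set (List I) := E₁ e \ E₂ e

/-- `S`: words containing at least one letter different from `e`. -/
def Sset (e : I) : Set (List I) := {x | x ∉ E₂ e}

/-- `G₁`: nonempty words starting with a letter different from `e`. -/
def G₁ (e : I) : Set (List I) := {x | x ≠ [] ∧ x.head? ≠ some e}

/-- `G₂`: nonempty words starting and ending with letters different from `e`. -/
def G₂ (e : I) : Set (List I) :=
  {x | x ≠ [] ∧ x.head? ≠ some e ∧ x.getLast? ≠ some e}

theorem stmt10 (bar : I → I) (e : I) (fus : I → I → Set I)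
    (hbar : ∀ a : I, bar (bar a) = a) (hbare : bar e = e)
    (hfus_left : ∀ β : I, fus e β = {β}) (hfus_right : ∀ β : I, fus β e = {β}) :
    ∀ α : I, ∀ j : ℕ, 1 ≤ j → ∀ β : I, β ≠ e → ∀ w : List I,
      fusW bar fus (α :: List.replicate j e) (β :: w) =
        {α :: (List.replicate j e ++ β :: w),
          α :: (List.replicate (j - 1) e ++ β :: w)} := by
  intro α j hj β hβ w
  obtain ⟨m, rfl⟩ : ∃ m, j = m + 1 := ⟨j - 1, (Nat.succ_pred_eq_of_pos hj).symm⟩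
  simp only [Nat.add_sub_cancel]
  have hrep : List.replicate (m + 1) e = List.replicate m e ++ [e] :=
    List.replicate_succ'
  have hxlast : (α :: List.replicate (m + 1) e).getLast? = some e := by
    rw [hrep, ← List.cons_append]
    exact List.getLast?_concat
  have hxdrop : (α :: List.replicate (m + 1) e).dropLast = α :: List.replicate m e := by
    rw [hrep, ← List.cons_append]
    exact List.dropLast_concat
  ext z
  simp only [Set.mem_insert_iff, Set.mem_singleton_iff, fusW, Set.mem_setOf_eq]
  constructor
  · rintro ⟨u, t, v, hx, hy, hz⟩
    -- first: t = []
    have ht : t = [] := by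
      by_contra htne
      have hlast : t.getLast? = some e := by
        cases u with
        | nil =>
          simp only [List.nil_append] at hx
          rw [← hx]; exact hxlast
        | cons u0 us =>
          have hust : List.replicate (m + 1) e = us ++ t := by
            simpa using congrArg List.tail hx
          have hmem : ∀ a ∈ t, a = e := fun a ha =>
            List.eq_of_mem_replicate (hust ▸ List.mem_append_right us ha)
          rw [List.getLast?_eq_getLast htne]
          exact congrArg some (hmem _ (List.getLast_mem htne))
      have hcne : conjW bar t ≠ [] := fun h => htne (by simpa [conjW] using h)
      have hhead : (conjW bar t).head? = some e := by
        rw [conjW, List.head?_reverse, List.getLast?_map, hlast]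
        simp [hbare]
      have : (β :: w).head? = some e := by
        rw [hy, List.head?_append_of_ne_nil _ hcne, hhead]
      exact hβ (by simpa using this)
    subst ht
    simp only [List.append_nil] at hx
    simp only [conjW, List.map_nil, List.reverse_nil, List.nil_append] at hy
    subst hx
    subst hy
    rcases hz with hz | ⟨a, b, ha, hb, γ, hγ, hz⟩
    · left; rw [hz]; simp
    · right
      rw [hxlast] at ha
      injection ha with ha
      subst ha
      simp only [List.head?_cons, Option.some.injEq] at hb
      subst hb
      rw [hfus_left] at hγ
      obtain rfl := hγ
      rw [hz, hxdrop]
      simp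
  · rintro (rfl | rfl)
    · exact ⟨α :: List.replicate (m+1) e, [], β :: w, by simp, by simp [conjW],
        Or.inl (by simp)⟩
    · refine ⟨α :: List.replicate (m+1) e, [], β :: w, by simp, by simp [conjW],
        Or.inr ⟨e, β, hxlast, rfl, β, by rw [hfus_left]; rfl, ?_⟩⟩
      rw [hxdrop]; simp
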